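/- In Pólya's urn with parameters r, b ≥ 1 and d ≥ 1, letting S_n be the number of red draws in the first n draws, the conditional joint law satisfies P(Y_1 = y_1, …, Y_n = y_n) = B(r/d + s_n, n + b/d − s_n)/B(r/d, b/d) for any (y_1,…,y_n) ∈ {0,1}^n with s_n = y_1 + ⋯ + y_n, where Y_i are the red-ball indicators. -/

import Mathlib

noncomputable def Betafn (a b : ℝ) : ℝ :=
  ∫ x in (0:ℝ)..1, x ^ (a - 1) * (1 - x) ^ (b - 1)

lemma Betafn_eq {a b : ℝ} (ha : 0 < a) (hb : 0 < b) :
    Betafn a b = Real.Gamma a * Real.Gamma b / Real.Gamma (a + b) := by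
  have hcast : ((Betafn a b : ℝ) : ℂ) = Complex.betaIntegral a b := by
    rw [Betafn, Complex.betaIntegral, ← intervalIntegral.integral_ofReal]
    apply intervalIntegral.integral_congr
    intro x hx
    rw [Set.uIcc_of_le (by norm_num : (0:ℝ) ≤ 1)] at hx
    have hx0 : 0 ≤ x := hx.1
    have hx1 : 0 ≤ 1 - x := by linarith [hx.2]
    push_cast
    rw [Complex.ofReal_cpow hx0, Complex.ofReal_cpow hx1]
    norm_num
  have hG := Complex.Gamma_mul_Gamma_eq_betaIntegral
    (s := (a:ℂ)) (t := (b:ℂ)) (by simpa using ha) (by simpa using hb)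
  rw [← Complex.ofReal_add, Complex.Gamma_ofReal, Complex.Gamma_ofReal,
    Complex.Gamma_ofReal, ← hcast] at hG
  have hne : Real.Gamma (a + b) ≠ 0 := (Real.Gamma_pos_of_pos (by linarith)).ne'
  have : ((Real.Gamma a * Real.Gamma b : ℝ) : ℂ) = ((Real.Gamma (a+b) * Betafn a b : ℝ) : ℂ) := by
    push_cast; exact hG
  have h2 := Complex.ofReal_inj.mp this
  field_simp
  linarith [h2]

theorem polya_joint_law (r b d n : ℕ) (hr : 1 ≤ r) (hb : 1 ≤ b) (hd : 1 ≤ d)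
    (y : ℕ → Bool)
    (s : ℕ → ℕ) (hs : ∀ j, s j = ((Finset.range j).filter (fun i => y i = true)).card) :
    (∏ j ∈ Finset.range n,
        ((if y j then ((r : ℝ) + s j * d) else ((b : ℝ) + (j - s j) * d))
          / ((r : ℝ) + b + j * d)))
      = Betafn ((r : ℝ) / d + s n) ((n : ℝ) + (b : ℝ) / d - s n)
          / Betafn ((r : ℝ) / d) ((b : ℝ) / d) := by
  have hd0 : (0:ℝ) < d := by exact_mod_cast hd
  have hr0 : (0:ℝ) < r := by exact_mod_cast hr
  have hb0 : (0:ℝ) < b := by exact_mod_cast hb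
  set α : ℝ := (r:ℝ)/d with hα
  set β : ℝ := (b:ℝ)/d with hβ
  have hα0 : 0 < α := div_pos hr0 hd0
  have hβ0 : 0 < β := div_pos hb0 hd0
  have hsle : ∀ j, s j ≤ j := by
    intro j
    rw [hs j]
    exact le_trans (Finset.card_filter_le _ _) (by simp)
  have hstep : ∀ j, s (j+1) = if y j then s j + 1 else s j := by
    intro j
    rw [hs (j+1), hs j, Finset.range_add_one, Finset.filter_insert]
    by_cases h : y j <;> simp [h, Finset.card_insert_of_notMem]
  -- main induction with Gamma form
  have key : ∀ m, (∏ j ∈ Finset.range m,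
        ((if y j then ((r : ℝ) + s j * d) else ((b : ℝ) + (j - s j) * d))
          / ((r : ℝ) + b + j * d)))
      = (Real.Gamma (α + s m) * Real.Gamma (β + m - s m) / Real.Gamma (α + β + m))
        * (Real.Gamma (α + β) / (Real.Gamma α * Real.Gamma β)) := by
    intro m
    induction m with
    | zero =>
      have h1 : Real.Gamma α ≠ 0 := (Real.Gamma_pos_of_pos hα0).ne'
      have h2 : Real.Gamma β ≠ 0 := (Real.Gamma_pos_of_pos hβ0).ne'
      have h3 : Real.Gamma (α + β) ≠ 0 := (Real.Gamma_pos_of_pos (by linarith)).ne'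
      simp only [Finset.range_zero, Finset.prod_empty, Nat.cast_zero]
      have hs0 : s 0 = 0 := by rw [hs 0]; simp
      rw [hs0]
      push_cast
      field_simp
      simp only [add_zero, sub_zero]
      ring
    | succ m ih =>
      rw [Finset.prod_range_succ, ih]
      have hden : (0:ℝ) < (r:ℝ) + b + m * d := by positivity
      have hsum : (0:ℝ) < α + β + m := by positivity
      have hGsum : Real.Gamma (α + β + (m+1)) = (α + β + m) * Real.Gamma (α + β + m) := by
        rw [show α + β + ((m:ℝ)+1) = (α + β + m) + 1 by ring, Real.Gamma_add_one hsum.ne']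
      have hsm : (s m : ℝ) ≤ (m : ℝ) := by exact_mod_cast hsle m
      by_cases hy : y m
      · have hsucc : (s (m+1) : ℝ) = s m + 1 := by rw [hstep m, if_pos hy]; push_cast; ring
        have hfac : ((r:ℝ) + s m * d) / ((r:ℝ) + b + m * d) = (α + s m) / (α + β + m) := by
          rw [hα, hβ]; field_simp
        have hpos : (0:ℝ) < α + s m := by positivity
        have hGa : Real.Gamma (α + s (m+1)) = (α + s m) * Real.Gamma (α + s m) := by
          rw [hsucc, show α + ((s m:ℝ) + 1) = (α + s m) + 1 by ring,
            Real.Gamma_add_one hpos.ne']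
        have hGb : Real.Gamma (β + (m+1 : ℕ) - s (m+1)) = Real.Gamma (β + m - s m) := by
          rw [hsucc, show ((m+1:ℕ):ℝ) = (m:ℝ)+1 by push_cast; ring,
            show β + ((m:ℝ)+1) - ((s m:ℝ)+1) = β + m - s m by ring]
        rw [if_pos hy, hfac, hGa, hGb, show ((m+1 : ℕ):ℝ) = (m:ℝ)+1 by push_cast; ring, hGsum]
        have h1 : Real.Gamma (α + β + m) ≠ 0 := (Real.Gamma_pos_of_pos hsum).ne'
        field_simp
      · have hsucc : (s (m+1) : ℝ) = s m := by rw [hstep m, if_neg hy]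
        have hfac : ((b:ℝ) + ((m:ℝ) - (s m:ℝ)) * d) / ((r:ℝ) + b + m * d)
            = (β + m - s m) / (α + β + m) := by
          rw [hα, hβ]; field_simp; ring
        have hpos : (0:ℝ) < β + m - s m := by
          have : (0:ℝ) ≤ (m:ℝ) - s m := by linarith
          linarith
        have hGb : Real.Gamma (β + (m+1 : ℕ) - s (m+1)) = (β + m - s m) * Real.Gamma (β + m - s m) := by
          rw [hsucc, show β + ((m:ℕ)+1 : ℕ) - (s m:ℝ) = (β + m - s m) + 1 by push_cast; ring,
            Real.Gamma_add_one hpos.ne']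
        have hGa : Real.Gamma (α + s (m+1)) = Real.Gamma (α + s m) := by rw [hsucc]
        rw [if_neg hy, hfac, hGa, hGb, show ((m+1 : ℕ):ℝ) = (m:ℝ)+1 by push_cast; ring, hGsum]
        have h1 : Real.Gamma (α + β + m) ≠ 0 := (Real.Gamma_pos_of_pos hsum).ne'
        field_simp
  rw [key n]
  have hsm : (s n : ℝ) ≤ (n : ℝ) := by exact_mod_cast hsle n
  have hpos1 : (0:ℝ) < α + s n := by positivity
  have hpos2 : (0:ℝ) < (n:ℝ) + β - s n := by linarith
  rw [Betafn_eq hpos1 hpos2, Betafn_eq hα0 hβ0]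
  have e1 : α + (s n:ℝ) + ((n:ℝ) + β - s n) = α + β + n := by ring
  have e2 : (n:ℝ) + β - s n = β + n - s n := by ring
  rw [e1, e2]
  have h1 : Real.Gamma α ≠ 0 := (Real.Gamma_pos_of_pos hα0).ne'
  have h2 : Real.Gamma β ≠ 0 := (Real.Gamma_pos_of_pos hβ0).ne'
  have h3 : Real.Gamma (α + β + n) ≠ 0 := (Real.Gamma_pos_of_pos (by positivity)).ne'
  have h4 : Real.Gamma (α + β) ≠ 0 := (Real.Gamma_pos_of_pos (by positivity)).ne'
  field_simp
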